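/- (RPO surrogate lower bound, Theorem 2) Let Δ^{P',P}(π) = J(P',π) - J(P,π), and define the surrogate L_{π'}(π) = Σ_{t=0}^∞ γ^t E_{s_t∼(P',π')} Σ_{a_t} π(a_t|s_t) Σ_{s_{t+1}} P'(s_{t+1}|s_t,a_t)[ r(s_t,a_t,s_{t+1}) + γ V^{P,π'}(s_{t+1}) - Q^{P,π'}(s_t,a_t) ]. Then Δ^{P',P}(π) ≥ L_{π'}(π) - C₁ where C₁ = (4γ r_max δ₁/(1-γ)²) · min( δ₂(γ²+2)/(1-γ), 1 + δ₂/(1-γ) ), with δ₁ the max one-step TV distance between P' and P and δ₂ the max TV distance between π and π'. -/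

import Mathlib

set_option linter.unusedSectionVars false
set_option maxHeartbeats 1000000

open scoped BigOperators

variable {S A : Type*}

/-- `P` is a transition kernel: for each state-action pair, a probability
distribution over next states. -/
def IsKernel [Fintype S] (P : S → A → S → ℝ) : Prop :=
  ∀ s a, (∀ s', 0 ≤ P s a s') ∧ ∑ s', P s a s' = 1

/-- `π` is a stochastic policy: for each state, a probability distribution over actions. -/
def IsPolicy [Fintype A] (π : S → A → ℝ) : Prop :=
  ∀ s, (∀ a, 0 ≤ π s a) ∧ ∑ a, π s a = 1

/-- `ρ` is a probability distribution over states. -/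
def IsDist [Fintype S] (ρ : S → ℝ) : Prop :=
  (∀ s, 0 ≤ ρ s) ∧ ∑ s, ρ s = 1

/-- One step of the state-marginal evolution under kernel `P` and policy `π`. -/
noncomputable def stepMarginal [Fintype S] [Fintype A]
    (P : S → A → S → ℝ) (π : S → A → ℝ) (μ : S → ℝ) : S → ℝ :=
  fun s' => ∑ s, μ s * ∑ a, π s a * P s a s'

/-- The time-`t` state marginal under kernel `P`, policy `π`, initial distribution `ρ`. -/
noncomputable def marginal [Fintype S] [Fintype A]
    (P : S → A → S → ℝ) (π : S → A → ℝ) (ρ : S → ℝ) : ℕ → S → ℝ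
  | 0 => ρ
  | t + 1 => stepMarginal P π (marginal P π ρ t)

/-- Expected one-step reward when the current state is distributed according to `μ`. -/
noncomputable def expReward [Fintype S] [Fintype A]
    (P : S → A → S → ℝ) (π : S → A → ℝ) (r : S → A → S → ℝ) (μ : S → ℝ) : ℝ :=
  ∑ s, μ s * ∑ a, π s a * ∑ s', P s a s' * r s a s'

/-- The expected discounted return `J(P, π)` with initial distribution `ρ`. -/
noncomputable def Jret [Fintype S] [Fintype A]
    (P : S → A → S → ℝ) (π : S → A → ℝ) (r : S → A → S → ℝ) (γ : ℝ) (ρ : S → ℝ) : ℝ :=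
  ∑' t : ℕ, γ ^ t * expReward P π r (marginal P π ρ t)

/-- The value function `V^{P,π}(s)`: the return starting from state `s`. -/
noncomputable def Vval [Fintype S] [Fintype A] [DecidableEq S]
    (P : S → A → S → ℝ) (π : S → A → ℝ) (r : S → A → S → ℝ) (γ : ℝ) (s : S) : ℝ :=
  Jret P π r γ (fun s' => if s' = s then 1 else 0)

/-- The state-action value function `Q^{P,π}(s,a)`. -/
noncomputable def Qval [Fintype S] [Fintype A] [DecidableEq S]
    (P : S → A → S → ℝ) (π : S → A → ℝ) (r : S → A → S → ℝ) (γ : ℝ) (s : S) (a : A) : ℝ :=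
  ∑ s', P s a s' * (r s a s' + γ * Vval P π r γ s')

/-- The advantage function `A^{P,π}(s,a) = Q^{P,π}(s,a) - V^{P,π}(s)`. -/
noncomputable def Aval [Fintype S] [Fintype A] [DecidableEq S]
    (P : S → A → S → ℝ) (π : S → A → ℝ) (r : S → A → S → ℝ) (γ : ℝ) (s : S) (a : A) : ℝ :=
  Qval P π r γ s a - Vval P π r γ s


section Aux

variable [Fintype S] [Fintype A] [DecidableEq S]

/-- average of a bounded function against a distribution is bounded -/
lemma abs_avg_le {ι : Type*} [Fintype ι] {w f : ι → ℝ} {M : ℝ}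
    (hw : ∀ i, 0 ≤ w i) (hw1 : ∑ i, w i = 1) (hf : ∀ i, |f i| ≤ M) :
    |∑ i, w i * f i| ≤ M := by
  calc |∑ i, w i * f i| ≤ ∑ i, |w i * f i| := Finset.abs_sum_le_sum_abs _ _
    _ = ∑ i, w i * |f i| := by
        refine Finset.sum_congr rfl fun i _ => ?_
        rw [abs_mul, abs_of_nonneg (hw i)]
    _ ≤ ∑ i, w i * M := by
        refine Finset.sum_le_sum fun i _ => mul_le_mul_of_nonneg_left (hf i) (hw i)
    _ = M := by rw [← Finset.sum_mul, hw1, one_mul]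

lemma summable_geom_bdd {γ : ℝ} (hγ0 : 0 ≤ γ) (hγ1 : γ < 1) {u : ℕ → ℝ} {C : ℝ}
    (h : ∀ t, |u t| ≤ C) : Summable (fun t => γ ^ t * u t) := by
  refine Summable.of_norm_bounded (g := fun t => γ ^ t * C)
    ((summable_geometric_of_lt_one hγ0 hγ1).mul_right C) (fun t => ?_)
  rw [Real.norm_eq_abs, abs_mul, abs_of_nonneg (pow_nonneg hγ0 t)]
  exact mul_le_mul_of_nonneg_left (h t) (pow_nonneg hγ0 t)

lemma abs_tsum_geom_le {γ : ℝ} (hγ0 : 0 ≤ γ) (hγ1 : γ < 1) {u : ℕ → ℝ} {C : ℝ}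
    (h : ∀ t, |u t| ≤ C) : |∑' t : ℕ, γ ^ t * u t| ≤ C / (1 - γ) := by
  have hsum := summable_geom_bdd hγ0 hγ1 h
  have hg : Summable (fun t : ℕ => γ ^ t * C) :=
    (summable_geometric_of_lt_one hγ0 hγ1).mul_right C
  calc |∑' t : ℕ, γ ^ t * u t|
      = ‖∑' t : ℕ, γ ^ t * u t‖ := (Real.norm_eq_abs _).symm
    _ ≤ ∑' t : ℕ, ‖γ ^ t * u t‖ := norm_tsum_le_tsum_norm hsum.abs
    _ = ∑' t : ℕ, |γ ^ t * u t| := by simp [Real.norm_eq_abs, abs_mul, abs_pow]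
    _ ≤ ∑' t : ℕ, γ ^ t * C := by
        refine Summable.tsum_le_tsum (fun t => ?_) hsum.abs hg
        rw [abs_mul, abs_of_nonneg (pow_nonneg hγ0 t)]
        exact mul_le_mul_of_nonneg_left (h t) (pow_nonneg hγ0 t)
    _ = C / (1 - γ) := by
        rw [tsum_mul_right, tsum_geometric_of_lt_one hγ0 hγ1, inv_mul_eq_div]

lemma isDist_marginal {P : S → A → S → ℝ} {π : S → A → ℝ} {ρ : S → ℝ}
    (hP : IsKernel P) (hπ : IsPolicy π) (hρ : IsDist ρ) (t : ℕ) :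
    IsDist (marginal P π ρ t) := by
  induction t with
  | zero => exact hρ
  | succ t ih =>
    obtain ⟨ih0, ih1⟩ := ih
    constructor
    · intro s'
      refine Finset.sum_nonneg fun s _ => mul_nonneg (ih0 s) (Finset.sum_nonneg fun a _ =>
        mul_nonneg ((hπ s).1 a) ((hP s a).1 s'))
    · show ∑ s', ∑ s, marginal P π ρ t s * ∑ a, π s a * P s a s' = 1
      rw [Finset.sum_comm]
      calc ∑ s, ∑ s', marginal P π ρ t s * ∑ a, π s a * P s a s'
          = ∑ s, marginal P π ρ t s * ∑ a, π s a * ∑ s', P s a s' := by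
            refine Finset.sum_congr rfl fun s _ => ?_
            rw [← Finset.mul_sum, Finset.sum_comm]
            congr 1
            exact Finset.sum_congr rfl fun a _ => by rw [← Finset.mul_sum]
        _ = 1 := by
            rw [← ih1]
            refine Finset.sum_congr rfl fun s _ => ?_
            have : ∑ a, π s a * ∑ s', P s a s' = 1 := by
              rw [← (hπ s).2]
              exact Finset.sum_congr rfl fun a _ => by rw [(hP s a).2, mul_one]
            rw [this, mul_one]

end Aux

section Aux2

variable [Fintype S] [Fintype A] [DecidableEq S]

lemma abs_expReward_le {P : S → A → S → ℝ} {π : S → A → ℝ} {r : S → A → S → ℝ}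
    {μ : S → ℝ} {rmax : ℝ} (hP : IsKernel P) (hπ : IsPolicy π) (hμ : IsDist μ)
    (hr : ∀ s a s', |r s a s'| ≤ rmax) :
    |expReward P π r μ| ≤ rmax := by
  refine abs_avg_le hμ.1 hμ.2 fun s => ?_
  refine abs_avg_le (hπ s).1 (hπ s).2 fun a => ?_
  refine abs_avg_le (hP s a).1 (hP s a).2 fun s' => hr s a s'

lemma abs_Jret_le {P : S → A → S → ℝ} {π : S → A → ℝ} {r : S → A → S → ℝ}
    {γ : ℝ} {ρ : S → ℝ} {rmax : ℝ} (hP : IsKernel P) (hπ : IsPolicy π) (hρ : IsDist ρ)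
    (hγ0 : 0 ≤ γ) (hγ1 : γ < 1) (hr : ∀ s a s', |r s a s'| ≤ rmax) :
    |Jret P π r γ ρ| ≤ rmax / (1 - γ) :=
  abs_tsum_geom_le hγ0 hγ1 fun t =>
    abs_expReward_le hP hπ (isDist_marginal hP hπ hρ t) hr

lemma isDist_delta (s : S) : IsDist (fun s' => if s' = s then 1 else 0) := by
  constructor
  · intro s'; dsimp only; split <;> norm_num
  · simp

lemma abs_Vval_le {P : S → A → S → ℝ} {π : S → A → ℝ} {r : S → A → S → ℝ}
    {γ : ℝ} {rmax : ℝ} (hP : IsKernel P) (hπ : IsPolicy π)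
    (hγ0 : 0 ≤ γ) (hγ1 : γ < 1) (hr : ∀ s a s', |r s a s'| ≤ rmax) (s : S) :
    |Vval P π r γ s| ≤ rmax / (1 - γ) :=
  abs_Jret_le hP hπ (isDist_delta s) hγ0 hγ1 hr

lemma abs_r_add_gV_le {P : S → A → S → ℝ} {π : S → A → ℝ} {r : S → A → S → ℝ}
    {γ : ℝ} {rmax : ℝ} (hP : IsKernel P) (hπ : IsPolicy π)
    (hγ0 : 0 ≤ γ) (hγ1 : γ < 1) (hr : ∀ s a s', |r s a s'| ≤ rmax)
    (s : S) (a : A) (s' : S) :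
    |r s a s' + γ * Vval P π r γ s'| ≤ rmax / (1 - γ) := by
  have h1 : |r s a s' + γ * Vval P π r γ s'| ≤ rmax + γ * (rmax / (1 - γ)) := by
    refine (abs_add_le _ _).trans (add_le_add (hr s a s') ?_)
    rw [abs_mul, abs_of_nonneg hγ0]
    exact mul_le_mul_of_nonneg_left (abs_Vval_le hP hπ hγ0 hγ1 hr s') hγ0
  have h2 : rmax + γ * (rmax / (1 - γ)) = rmax / (1 - γ) := by
    have hne : (1 : ℝ) - γ ≠ 0 := by linarith
    field_simp
    ring
  linarith

lemma abs_Qval_le {P : S → A → S → ℝ} {π : S → A → ℝ} {r : S → A → S → ℝ}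
    {γ : ℝ} {rmax : ℝ} (hP : IsKernel P) (hπ : IsPolicy π)
    (hγ0 : 0 ≤ γ) (hγ1 : γ < 1) (hr : ∀ s a s', |r s a s'| ≤ rmax) (s : S) (a : A) :
    |Qval P π r γ s a| ≤ rmax / (1 - γ) :=
  abs_avg_le (hP s a).1 (hP s a).2 fun s' => abs_r_add_gV_le hP hπ hγ0 hγ1 hr s a s'

lemma marginal_eq_sum_delta (P : S → A → S → ℝ) (π : S → A → ℝ) (ρ : S → ℝ)
    (t : ℕ) (s' : S) :
    marginal P π ρ t s' =
      ∑ s₀, ρ s₀ * marginal P π (fun x => if x = s₀ then 1 else 0) t s' := by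
  induction t generalizing s' with
  | zero => simp [marginal]
  | succ t ih =>
    show stepMarginal P π (marginal P π ρ t) s' = _
    unfold stepMarginal
    calc ∑ s, marginal P π ρ t s * ∑ a, π s a * P s a s'
        = ∑ s, ∑ s₀, ρ s₀ * marginal P π (fun x => if x = s₀ then 1 else 0) t s *
            ∑ a, π s a * P s a s' := by
          refine Finset.sum_congr rfl fun s _ => by rw [ih, Finset.sum_mul]
      _ = ∑ s₀, ∑ s, ρ s₀ * marginal P π (fun x => if x = s₀ then 1 else 0) t s *
            ∑ a, π s a * P s a s' := Finset.sum_comm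
      _ = ∑ s₀, ρ s₀ * ∑ s, marginal P π (fun x => if x = s₀ then 1 else 0) t s *
            ∑ a, π s a * P s a s' := by
          refine Finset.sum_congr rfl fun s₀ _ => ?_
          rw [Finset.mul_sum]
          refine Finset.sum_congr rfl fun s _ => by ring
      _ = _ := rfl

lemma expReward_marginal_eq (P : S → A → S → ℝ) (π : S → A → ℝ) (r : S → A → S → ℝ)
    (ρ : S → ℝ) (t : ℕ) :
    expReward P π r (marginal P π ρ t) =
      ∑ s₀, ρ s₀ * expReward P π r (marginal P π (fun x => if x = s₀ then 1 else 0) t) := by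
  unfold expReward
  calc ∑ s, marginal P π ρ t s * ∑ a, π s a * ∑ s', P s a s' * r s a s'
      = ∑ s, ∑ s₀, ρ s₀ * marginal P π (fun x => if x = s₀ then 1 else 0) t s *
          ∑ a, π s a * ∑ s', P s a s' * r s a s' := by
        refine Finset.sum_congr rfl fun s _ => by rw [marginal_eq_sum_delta, Finset.sum_mul]
    _ = ∑ s₀, ∑ s, ρ s₀ * marginal P π (fun x => if x = s₀ then 1 else 0) t s *
          ∑ a, π s a * ∑ s', P s a s' * r s a s' := Finset.sum_comm
    _ = _ := by
        refine Finset.sum_congr rfl fun s₀ _ => ?_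
        rw [Finset.mul_sum]
        refine Finset.sum_congr rfl fun s _ => by ring

lemma Jret_eq_sum_Vval {P : S → A → S → ℝ} {π : S → A → ℝ} {r : S → A → S → ℝ}
    {γ : ℝ} {rmax : ℝ} (hP : IsKernel P) (hπ : IsPolicy π)
    (hγ0 : 0 ≤ γ) (hγ1 : γ < 1) (hr : ∀ s a s', |r s a s'| ≤ rmax) (ρ : S → ℝ) :
    Jret P π r γ ρ = ∑ s₀, ρ s₀ * Vval P π r γ s₀ := by
  have hsum : ∀ s₀ : S, Summable (fun t : ℕ => ρ s₀ * (γ ^ t *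
      expReward P π r (marginal P π (fun x => if x = s₀ then 1 else 0) t))) := by
    intro s₀
    exact (summable_geom_bdd hγ0 hγ1 (fun t =>
      abs_expReward_le hP hπ (isDist_marginal hP hπ (isDist_delta s₀) t) hr)).mul_left _
  unfold Jret
  calc (∑' t : ℕ, γ ^ t * expReward P π r (marginal P π ρ t))
      = ∑' t : ℕ, ∑ s₀, ρ s₀ * (γ ^ t *
          expReward P π r (marginal P π (fun x => if x = s₀ then 1 else 0) t)) := by
        refine tsum_congr fun t => ?_
        rw [expReward_marginal_eq, Finset.mul_sum]
        refine Finset.sum_congr rfl fun s₀ _ => by ring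
    _ = ∑ s₀, ∑' t : ℕ, ρ s₀ * (γ ^ t *
          expReward P π r (marginal P π (fun x => if x = s₀ then 1 else 0) t)) := by
        exact Summable.tsum_finsetSum fun s₀ _ => hsum s₀
    _ = ∑ s₀, ρ s₀ * Vval P π r γ s₀ := by
        refine Finset.sum_congr rfl fun s₀ _ => ?_
        rw [tsum_mul_left]
        rfl

lemma marginal_shift (P : S → A → S → ℝ) (π : S → A → ℝ) (ρ : S → ℝ) (t : ℕ) :
    marginal P π ρ (t + 1) = marginal P π (stepMarginal P π ρ) t := by
  induction t with
  | zero => rfl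
  | succ t ih =>
    show stepMarginal P π (marginal P π ρ (t + 1)) = _
    rw [ih]
    rfl

lemma Jret_step {P : S → A → S → ℝ} {π : S → A → ℝ} {r : S → A → S → ℝ}
    {γ : ℝ} {rmax : ℝ} {ρ : S → ℝ} (hP : IsKernel P) (hπ : IsPolicy π) (hρ : IsDist ρ)
    (hγ0 : 0 ≤ γ) (hγ1 : γ < 1) (hr : ∀ s a s', |r s a s'| ≤ rmax) :
    Jret P π r γ ρ = expReward P π r ρ + γ * Jret P π r γ (stepMarginal P π ρ) := by
  have hsum : Summable (fun t : ℕ => γ ^ t * expReward P π r (marginal P π ρ t)) :=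
    summable_geom_bdd hγ0 hγ1 fun t =>
      abs_expReward_le hP hπ (isDist_marginal hP hπ hρ t) hr
  unfold Jret
  rw [Summable.tsum_eq_zero_add hsum]
  have h3 : (∑' t : ℕ, γ ^ (t + 1) * expReward P π r (marginal P π ρ (t + 1)))
      = γ * ∑' t : ℕ, γ ^ t * expReward P π r (marginal P π (stepMarginal P π ρ) t) := by
    rw [← tsum_mul_left]
    refine tsum_congr fun t => ?_
    rw [marginal_shift, pow_succ]
    ring
  rw [h3]
  simp only [pow_zero, one_mul]
  rfl

lemma Vval_bellman {P : S → A → S → ℝ} {π : S → A → ℝ} {r : S → A → S → ℝ}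
    {γ : ℝ} {rmax : ℝ} (hP : IsKernel P) (hπ : IsPolicy π)
    (hγ0 : 0 ≤ γ) (hγ1 : γ < 1) (hr : ∀ s a s', |r s a s'| ≤ rmax) (s : S) :
    Vval P π r γ s = ∑ a, π s a * Qval P π r γ s a := by
  have hstep : ∀ s₀, stepMarginal P π (fun x => if x = s then 1 else 0) s₀ =
      ∑ a, π s a * P s a s₀ := by
    intro s₀
    unfold stepMarginal
    rw [Finset.sum_eq_single s]
    · simp
    · intro b _ hb; simp [hb]
    · simp
  have h1 : Vval P π r γ s = expReward P π r (fun x => if x = s then 1 else 0) +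
      γ * ∑ s₀, (∑ a, π s a * P s a s₀) * Vval P π r γ s₀ := by
    unfold Vval
    rw [Jret_step hP hπ (isDist_delta s) hγ0 hγ1 hr,
      Jret_eq_sum_Vval hP hπ hγ0 hγ1 hr]
    congr 2
    refine Finset.sum_congr rfl fun s₀ _ => by rw [hstep]; rfl
  have h2 : expReward P π r (fun x => if x = s then 1 else 0) =
      ∑ a, π s a * ∑ s', P s a s' * r s a s' := by
    unfold expReward
    rw [Finset.sum_eq_single s]
    · simp
    · intro b _ hb; simp [hb]
    · simp
  rw [h1, h2]
  unfold Qval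
  simp only [Finset.mul_sum, Finset.sum_mul, mul_add, Finset.sum_add_distrib]
  congr 1
  rw [Finset.sum_comm]
  refine Finset.sum_congr rfl fun a _ => Finset.sum_congr rfl fun s' _ => by ring

end Aux2

section Aux3

variable [Fintype S] [Fintype A] [DecidableEq S]

lemma fubini_mul {c : ℝ} {g : A → ℝ} {h : A → S → ℝ} :
    ∑ x : S, c * ∑ a : A, g a * h a x = ∑ a : A, c * (g a * ∑ x : S, h a x) := by
  calc ∑ x : S, c * ∑ a : A, g a * h a x
      = ∑ x : S, ∑ a : A, c * (g a * h a x) := by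
        refine Finset.sum_congr rfl fun x _ => ?_
        rw [Finset.mul_sum]
    _ = ∑ a : A, ∑ x : S, c * (g a * h a x) := Finset.sum_comm
    _ = ∑ a : A, c * (g a * ∑ x : S, h a x) := by
        refine Finset.sum_congr rfl fun a _ => ?_
        rw [Finset.mul_sum, Finset.mul_sum]

lemma abs_sum_mul_le {ι : Type*} [Fintype ι] {c f : ι → ℝ} {M : ℝ}
    (hf : ∀ i, |f i| ≤ M) : |∑ i, c i * f i| ≤ (∑ i, |c i|) * M := by
  calc |∑ i, c i * f i| ≤ ∑ i, |c i * f i| := Finset.abs_sum_le_sum_abs _ _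
    _ ≤ ∑ i, |c i| * M := by
        refine Finset.sum_le_sum fun i _ => ?_
        rw [abs_mul]
        exact mul_le_mul_of_nonneg_left (hf i) (abs_nonneg _)
    _ = (∑ i, |c i|) * M := (Finset.sum_mul _ _ _).symm

lemma abs_tsum_le_of_le {u b : ℕ → ℝ} (hu : Summable u) (hb : Summable b)
    (h : ∀ t, |u t| ≤ b t) : |∑' t, u t| ≤ ∑' t, b t := by
  calc |∑' t, u t| = ‖∑' t, u t‖ := (Real.norm_eq_abs _).symm
    _ ≤ ∑' t, ‖u t‖ := norm_tsum_le_tsum_norm hu.abs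
    _ = ∑' t, |u t| := by simp [Real.norm_eq_abs]
    _ ≤ ∑' t, b t := Summable.tsum_le_tsum h hu.abs hb

lemma sum_mul_step (K : S → A → S → ℝ) (π : S → A → ℝ) (μ : S → ℝ) (f : S → ℝ) :
    ∑ s', stepMarginal K π μ s' * f s' =
      ∑ s, μ s * ∑ a, π s a * ∑ s', K s a s' * f s' := by
  unfold stepMarginal
  calc ∑ s', (∑ s, μ s * ∑ a, π s a * K s a s') * f s'
      = ∑ s', ∑ s, (μ s * ∑ a, π s a * K s a s') * f s' := by
        refine Finset.sum_congr rfl fun s' _ => Finset.sum_mul _ _ _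
    _ = ∑ s, ∑ s', (μ s * ∑ a, π s a * K s a s') * f s' := Finset.sum_comm
    _ = ∑ s, μ s * ∑ a, π s a * ∑ s', K s a s' * f s' := by
        refine Finset.sum_congr rfl fun s _ => ?_
        calc ∑ s', (μ s * ∑ a, π s a * K s a s') * f s'
            = ∑ s', ∑ a, μ s * (π s a * K s a s') * f s' := by
              refine Finset.sum_congr rfl fun s' _ => by
                rw [Finset.mul_sum, Finset.sum_mul]
          _ = ∑ a, ∑ s', μ s * (π s a * K s a s') * f s' := Finset.sum_comm
          _ = μ s * ∑ a, π s a * ∑ s', K s a s' * f s' := by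
              rw [Finset.mul_sum]
              refine Finset.sum_congr rfl fun a _ => ?_
              rw [Finset.mul_sum, Finset.mul_sum]
              refine Finset.sum_congr rfl fun s' _ => by ring

/-- The key telescoping identity. -/
lemma telescope {K : S → A → S → ℝ} {π : S → A → ℝ} {r : S → A → S → ℝ}
    {γ : ℝ} {rmax : ℝ} {ρ : S → ℝ} (hK : IsKernel K) (hπ : IsPolicy π) (hρ : IsDist ρ)
    (hγ0 : 0 ≤ γ) (hγ1 : γ < 1) (hr : ∀ s a s', |r s a s'| ≤ rmax)
    (V : S → ℝ) (MV : ℝ) (hV : ∀ s, |V s| ≤ MV) :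
    ∑' t : ℕ, γ ^ t * ∑ s, marginal K π ρ t s *
        ((∑ a, π s a * ∑ s', K s a s' * (r s a s' + γ * V s')) - V s)
      = Jret K π r γ ρ - ∑ s, ρ s * V s := by
  have hdist := fun t => isDist_marginal hK hπ hρ t
  -- pointwise decomposition
  have dec : ∀ t : ℕ, ∑ s, marginal K π ρ t s *
      ((∑ a, π s a * ∑ s', K s a s' * (r s a s' + γ * V s')) - V s)
      = expReward K π r (marginal K π ρ t)
        + γ * (∑ s', marginal K π ρ (t + 1) s' * V s')
        - ∑ s, marginal K π ρ t s * V s := by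
    intro t
    have e1 : (∑ s', marginal K π ρ (t + 1) s' * V s')
        = ∑ s, marginal K π ρ t s * ∑ a, π s a * ∑ s', K s a s' * V s' := by
      show ∑ s', stepMarginal K π (marginal K π ρ t) s' * V s' = _
      exact sum_mul_step K π _ V
    rw [e1]
    unfold expReward
    rw [Finset.mul_sum, ← Finset.sum_add_distrib, ← Finset.sum_sub_distrib]
    refine Finset.sum_congr rfl fun s _ => ?_
    have e2 : (∑ a, π s a * ∑ s', K s a s' * (r s a s' + γ * V s'))
        = (∑ a, π s a * ∑ s', K s a s' * r s a s')
          + γ * ∑ a, π s a * ∑ s', K s a s' * V s' := by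
      rw [Finset.mul_sum, ← Finset.sum_add_distrib]
      refine Finset.sum_congr rfl fun a _ => ?_
      simp only [sub_mul, mul_sub, mul_add, add_mul, Finset.mul_sum, Finset.sum_mul,
        Finset.sum_sub_distrib, Finset.sum_add_distrib]
      ring_nf
      congr 1
      exact Finset.sum_congr rfl fun x _ => by ring
    rw [e2]
    ring
  -- summabilities
  have hsa : Summable (fun t : ℕ => γ ^ t * expReward K π r (marginal K π ρ t)) :=
    summable_geom_bdd hγ0 hγ1 fun t => abs_expReward_le hK hπ (hdist t) hr
  have hsb : Summable (fun t : ℕ => γ ^ t * ∑ s, marginal K π ρ t s * V s) :=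
    summable_geom_bdd hγ0 hγ1 fun t => abs_avg_le (hdist t).1 (hdist t).2 hV
  have hsb' : Summable (fun t : ℕ => γ ^ (t + 1) * ∑ s, marginal K π ρ (t + 1) s * V s) :=
    (summable_nat_add_iff 1).mpr hsb
  calc ∑' t : ℕ, γ ^ t * ∑ s, marginal K π ρ t s *
        ((∑ a, π s a * ∑ s', K s a s' * (r s a s' + γ * V s')) - V s)
      = ∑' t : ℕ, (γ ^ t * expReward K π r (marginal K π ρ t)
          + γ ^ (t + 1) * ∑ s', marginal K π ρ (t + 1) s' * V s'
          - γ ^ t * ∑ s, marginal K π ρ t s * V s) := by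
        refine tsum_congr fun t => ?_
        rw [dec t, pow_succ]
        ring
    _ = (∑' t : ℕ, γ ^ t * expReward K π r (marginal K π ρ t))
          + (∑' t : ℕ, γ ^ (t + 1) * ∑ s', marginal K π ρ (t + 1) s' * V s')
          - ∑' t : ℕ, γ ^ t * ∑ s, marginal K π ρ t s * V s := by
        rw [Summable.tsum_sub (hsa.add hsb') hsb, Summable.tsum_add hsa hsb']
    _ = Jret K π r γ ρ - ∑ s, ρ s * V s := by
        have hshift : (∑' t : ℕ, γ ^ t * ∑ s, marginal K π ρ t s * V s)
            = γ ^ 0 * ∑ s, marginal K π ρ 0 s * V s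
              + ∑' t : ℕ, γ ^ (t + 1) * ∑ s', marginal K π ρ (t + 1) s' * V s' :=
          Summable.tsum_eq_zero_add hsb
        rw [hshift]
        simp only [pow_zero, one_mul]
        have : (∑ s, marginal K π ρ 0 s * V s) = ∑ s, ρ s * V s := rfl
        rw [this]
        unfold Jret
        ring

lemma l1_le_two {μ ν : S → ℝ} (hμ : IsDist μ) (hν : IsDist ν) :
    ∑ s, |μ s - ν s| ≤ 2 := by
  calc ∑ s, |μ s - ν s| ≤ ∑ s, (μ s + ν s) := by
        refine Finset.sum_le_sum fun s _ => ?_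
        rw [abs_sub_le_iff]
        constructor
        · have := hν.1 s; linarith
        · have := hμ.1 s; linarith
    _ = 2 := by rw [Finset.sum_add_distrib, hμ.2, hν.2]; norm_num

lemma l1_step_policy {P : S → A → S → ℝ} {π π' : S → A → ℝ} {μ ν : S → ℝ} {c : ℝ}
    (hP : IsKernel P) (hπ : IsPolicy π) (hν : IsDist ν)
    (hc : ∀ s, ∑ a, |π s a - π' s a| ≤ c) :
    ∑ s', |stepMarginal P π μ s' - stepMarginal P π' ν s'| ≤ (∑ s, |μ s - ν s|) + c := by
  have key : ∀ s', |stepMarginal P π μ s' - stepMarginal P π' ν s'| ≤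
      ∑ s, (|μ s - ν s| * ∑ a, π s a * P s a s'
        + ν s * ∑ a, |π s a - π' s a| * P s a s') := by
    intro s'
    have e : stepMarginal P π μ s' - stepMarginal P π' ν s' =
        ∑ s, ((μ s - ν s) * ∑ a, π s a * P s a s'
          + ν s * ∑ a, (π s a - π' s a) * P s a s') := by
      unfold stepMarginal
      rw [← Finset.sum_sub_distrib]
      refine Finset.sum_congr rfl fun s _ => ?_
      simp only [sub_mul, mul_sub, mul_add, add_mul, Finset.mul_sum, Finset.sum_mul,
        Finset.sum_sub_distrib, Finset.sum_add_distrib]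
      ring_nf
    rw [e]
    refine (Finset.abs_sum_le_sum_abs _ _).trans (Finset.sum_le_sum fun s _ => ?_)
    refine (abs_add_le _ _).trans (add_le_add ?_ ?_)
    · rw [abs_mul]
      refine mul_le_mul_of_nonneg_left ?_ (abs_nonneg _)
      rw [abs_of_nonneg]
      exact Finset.sum_nonneg fun a _ => mul_nonneg ((hπ s).1 a) ((hP s a).1 s')
    · rw [abs_mul, abs_of_nonneg (hν.1 s)]
      refine mul_le_mul_of_nonneg_left ?_ (hν.1 s)
      refine (Finset.abs_sum_le_sum_abs _ _).trans (Finset.sum_le_sum fun a _ => ?_)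
      rw [abs_mul, abs_of_nonneg ((hP s a).1 s')]
  calc ∑ s', |stepMarginal P π μ s' - stepMarginal P π' ν s'|
      ≤ ∑ s', ∑ s, (|μ s - ν s| * ∑ a, π s a * P s a s'
          + ν s * ∑ a, |π s a - π' s a| * P s a s') :=
        Finset.sum_le_sum fun s' _ => key s'
    _ = ∑ s, (|μ s - ν s| * (∑ a, π s a * ∑ s', P s a s')
          + ν s * ∑ a, |π s a - π' s a| * ∑ s', P s a s') := by
        rw [Finset.sum_comm]
        refine Finset.sum_congr rfl fun s _ => ?_
        rw [Finset.sum_add_distrib, Finset.mul_sum, Finset.mul_sum]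
        congr 1
        · exact fubini_mul
        · exact fubini_mul
    _ ≤ (∑ s, |μ s - ν s|) + c := by
        have e : ∀ s, |μ s - ν s| * (∑ a, π s a * ∑ s', P s a s') = |μ s - ν s| := by
          intro s
          have : (∑ a, π s a * ∑ s', P s a s') = 1 := by
            rw [← (hπ s).2]
            exact Finset.sum_congr rfl fun a _ => by rw [(hP s a).2, mul_one]
          rw [this, mul_one]
        have e2 : ∀ s, (∑ a, |π s a - π' s a| * ∑ s', P s a s') = ∑ a, |π s a - π' s a| := by
          intro s
          exact Finset.sum_congr rfl fun a _ => by rw [(hP s a).2, mul_one]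
        calc ∑ s, (|μ s - ν s| * (∑ a, π s a * ∑ s', P s a s')
              + ν s * ∑ a, |π s a - π' s a| * ∑ s', P s a s')
            = ∑ s, (|μ s - ν s| + ν s * ∑ a, |π s a - π' s a|) := by
              refine Finset.sum_congr rfl fun s _ => by rw [e s, e2 s]
          _ ≤ ∑ s, (|μ s - ν s| + ν s * c) := by
              refine Finset.sum_le_sum fun s _ => add_le_add_right
                (mul_le_mul_of_nonneg_left (hc s) (hν.1 s)) _
          _ = (∑ s, |μ s - ν s|) + c := by
              rw [Finset.sum_add_distrib, ← Finset.sum_mul, hν.2, one_mul]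

lemma l1_step_kernel {P P' : S → A → S → ℝ} {π : S → A → ℝ} {μ ν : S → ℝ} {c : ℝ}
    (hP : IsKernel P) (hP' : IsKernel P') (hπ : IsPolicy π) (hν : IsDist ν)
    (hc : ∀ s a, ∑ s', |P' s a s' - P s a s'| ≤ c) :
    ∑ s', |stepMarginal P' π μ s' - stepMarginal P π ν s'| ≤ (∑ s, |μ s - ν s|) + c := by
  have key : ∀ s', |stepMarginal P' π μ s' - stepMarginal P π ν s'| ≤
      ∑ s, (|μ s - ν s| * ∑ a, π s a * P' s a s'
        + ν s * ∑ a, π s a * |P' s a s' - P s a s'|) := by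
    intro s'
    have e : stepMarginal P' π μ s' - stepMarginal P π ν s' =
        ∑ s, ((μ s - ν s) * ∑ a, π s a * P' s a s'
          + ν s * ∑ a, π s a * (P' s a s' - P s a s')) := by
      unfold stepMarginal
      rw [← Finset.sum_sub_distrib]
      refine Finset.sum_congr rfl fun s _ => ?_
      simp only [sub_mul, mul_sub, mul_add, add_mul, Finset.mul_sum, Finset.sum_mul,
        Finset.sum_sub_distrib, Finset.sum_add_distrib]
      ring_nf
    rw [e]
    refine (Finset.abs_sum_le_sum_abs _ _).trans (Finset.sum_le_sum fun s _ => ?_)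
    refine (abs_add_le _ _).trans (add_le_add ?_ ?_)
    · rw [abs_mul]
      refine mul_le_mul_of_nonneg_left ?_ (abs_nonneg _)
      rw [abs_of_nonneg]
      exact Finset.sum_nonneg fun a _ => mul_nonneg ((hπ s).1 a) ((hP' s a).1 s')
    · rw [abs_mul, abs_of_nonneg (hν.1 s)]
      refine mul_le_mul_of_nonneg_left ?_ (hν.1 s)
      refine (Finset.abs_sum_le_sum_abs _ _).trans (Finset.sum_le_sum fun a _ => ?_)
      rw [abs_mul, abs_of_nonneg ((hπ s).1 a)]
  calc ∑ s', |stepMarginal P' π μ s' - stepMarginal P π ν s'|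
      ≤ ∑ s', ∑ s, (|μ s - ν s| * ∑ a, π s a * P' s a s'
          + ν s * ∑ a, π s a * |P' s a s' - P s a s'|) :=
        Finset.sum_le_sum fun s' _ => key s'
    _ = ∑ s, (|μ s - ν s| * (∑ a, π s a * ∑ s', P' s a s')
          + ν s * ∑ a, π s a * ∑ s', |P' s a s' - P s a s'|) := by
        rw [Finset.sum_comm]
        refine Finset.sum_congr rfl fun s _ => ?_
        rw [Finset.sum_add_distrib, Finset.mul_sum, Finset.mul_sum]
        congr 1
        · exact fubini_mul
        · exact fubini_mul
    _ ≤ (∑ s, |μ s - ν s|) + c := by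
        have e : ∀ s, |μ s - ν s| * (∑ a, π s a * ∑ s', P' s a s') = |μ s - ν s| := by
          intro s
          have : (∑ a, π s a * ∑ s', P' s a s') = 1 := by
            rw [← (hπ s).2]
            exact Finset.sum_congr rfl fun a _ => by rw [(hP' s a).2, mul_one]
          rw [this, mul_one]
        have e2 : ∀ s, (∑ a, π s a * ∑ s', |P' s a s' - P s a s'|) ≤ c := by
          intro s
          calc ∑ a, π s a * ∑ s', |P' s a s' - P s a s'| ≤ ∑ a, π s a * c :=
              Finset.sum_le_sum fun a _ => mul_le_mul_of_nonneg_left (hc s a) ((hπ s).1 a)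
            _ = c := by rw [← Finset.sum_mul, (hπ s).2, one_mul]
        calc ∑ s, (|μ s - ν s| * (∑ a, π s a * ∑ s', P' s a s')
              + ν s * ∑ a, π s a * ∑ s', |P' s a s' - P s a s'|)
            ≤ ∑ s, (|μ s - ν s| + ν s * c) := by
              refine Finset.sum_le_sum fun s _ => ?_
              rw [e s]
              exact add_le_add_right (mul_le_mul_of_nonneg_left (e2 s) (hν.1 s)) _
          _ = (∑ s, |μ s - ν s|) + c := by
              rw [Finset.sum_add_distrib, ← Finset.sum_mul, hν.2, one_mul]

lemma l1_marg_policy {P : S → A → S → ℝ} {π π' : S → A → ℝ} {ρ : S → ℝ} {c : ℝ}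
    (hP : IsKernel P) (hπ : IsPolicy π) (hπ' : IsPolicy π') (hρ : IsDist ρ)
    (hc : ∀ s, ∑ a, |π s a - π' s a| ≤ c) (t : ℕ) :
    ∑ s, |marginal P π ρ t s - marginal P π' ρ t s| ≤ t * c := by
  induction t with
  | zero => simp [marginal]
  | succ t ih =>
    have := l1_step_policy (μ := marginal P π ρ t) (ν := marginal P π' ρ t)
      hP hπ (isDist_marginal hP hπ' hρ t) hc
    push_cast
    calc ∑ s, |marginal P π ρ (t+1) s - marginal P π' ρ (t+1) s|
        ≤ (∑ s, |marginal P π ρ t s - marginal P π' ρ t s|) + c := this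
      _ ≤ t * c + c := by
          have h := ih
          push_cast at h
          linarith
      _ = (t + 1 : ℝ) * c := by ring

lemma l1_marg_kernel {P P' : S → A → S → ℝ} {π : S → A → ℝ} {ρ : S → ℝ} {c : ℝ}
    (hP : IsKernel P) (hP' : IsKernel P') (hπ : IsPolicy π) (hρ : IsDist ρ)
    (hc : ∀ s a, ∑ s', |P' s a s' - P s a s'| ≤ c) (t : ℕ) :
    ∑ s, |marginal P' π ρ t s - marginal P π ρ t s| ≤ t * c := by
  induction t with
  | zero => simp [marginal]
  | succ t ih =>
    have := l1_step_kernel (μ := marginal P' π ρ t) (ν := marginal P π ρ t)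
      hP hP' hπ (isDist_marginal hP hπ hρ t) hc
    push_cast
    calc ∑ s, |marginal P' π ρ (t+1) s - marginal P π ρ (t+1) s|
        ≤ (∑ s, |marginal P' π ρ t s - marginal P π ρ t s|) + c := this
      _ ≤ t * c + c := by
          have h := ih
          push_cast at h
          linarith
      _ = (t + 1 : ℝ) * c := by ring

end Aux3

/-- RPO surrogate lower bound, Theorem 2:
`Δ^{P',P}(π) ≥ L_{π'}(π) - C₁`. -/
theorem rpo_lower_bound [Fintype S] [Fintype A] [DecidableEq S]
    (P P' : S → A → S → ℝ) (π π' : S → A → ℝ) (r : S → A → S → ℝ) (γ : ℝ) (ρ : S → ℝ)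
    (rmax δ₁ δ₂ : ℝ)
    (hP : IsKernel P) (hP' : IsKernel P') (hπ : IsPolicy π) (hπ' : IsPolicy π')
    (hρ : IsDist ρ)
    (hγ0 : 0 ≤ γ) (hγ1 : γ < 1)
    (hr : ∀ s a s', |r s a s'| ≤ rmax)
    (hδ₁ : ∀ s a, (1 / 2) * ∑ s', |P' s a s' - P s a s'| ≤ δ₁)
    (hδ₂ : ∀ s, (1 / 2) * ∑ a, |π s a - π' s a| ≤ δ₂) :
    Jret P' π r γ ρ - Jret P π r γ ρ ≥
      (∑' t : ℕ, γ ^ t * ∑ s, marginal P' π' ρ t s * ∑ a, π s a *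
        ∑ s', P' s a s' * (r s a s' + γ * Vval P π' r γ s' - Qval P π' r γ s a)) -
      4 * γ * rmax * δ₁ / (1 - γ) ^ 2 *
        min (δ₂ * (γ ^ 2 + 2) / (1 - γ)) (1 + δ₂ / (1 - γ)) := by
  have h1γ : (0:ℝ) < 1 - γ := by linarith
  have hne : (1:ℝ) - γ ≠ 0 := ne_of_gt h1γ
  have hSne : Nonempty S := by
    by_contra h
    rw [not_nonempty_iff] at h
    have h2 := hρ.2
    rw [Finset.univ_eq_empty, Finset.sum_empty] at h2
    norm_num at h2
  obtain ⟨s0⟩ := hSne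
  have hAne : Nonempty A := by
    by_contra h
    rw [not_nonempty_iff] at h
    have h2 := (hπ s0).2
    rw [Finset.univ_eq_empty, Finset.sum_empty] at h2
    norm_num at h2
  obtain ⟨a0⟩ := hAne
  have hrmax : 0 ≤ rmax := le_trans (abs_nonneg _) (hr s0 a0 s0)
  have hd1 : 0 ≤ δ₁ := le_trans (by positivity) (hδ₁ s0 a0)
  have hd2 : 0 ≤ δ₂ := le_trans (by positivity) (hδ₂ s0)
  have hδ₁' : ∀ s a, ∑ s', |P' s a s' - P s a s'| ≤ 2 * δ₁ := fun s a => by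
    have := hδ₁ s a; linarith
  have hδ₂' : ∀ s, ∑ a, |π s a - π' s a| ≤ 2 * δ₂ := fun s => by
    have := hδ₂ s; linarith
  set M : ℝ := rmax / (1 - γ) with hM
  have hM0 : 0 ≤ M := by positivity
  have hnorm : ‖γ‖ < 1 := by rw [Real.norm_eq_abs, abs_of_nonneg hγ0]; exact hγ1
  have hVb : ∀ s, |Vval P π' r γ s| ≤ M := fun s => abs_Vval_le hP hπ' hγ0 hγ1 hr s
  have hQb : ∀ s a, |Qval P π' r γ s a| ≤ M := fun s a => abs_Qval_le hP hπ' hγ0 hγ1 hr s a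
  set G : S → ℝ := fun s => ∑ a, π s a *
    ∑ s', (P' s a s' - P s a s') * (r s a s' + γ * Vval P π' r γ s') with hGdef
  set Ab : S → ℝ := fun s => (∑ a, π s a * Qval P π' r γ s a) - Vval P π' r γ s with hAbdef
  have hMG0 : (0:ℝ) ≤ 2 * δ₁ * M := by positivity
  have hMA0 : (0:ℝ) ≤ 2 * δ₂ * M := by positivity
  have hGb : ∀ s, |G s| ≤ 2 * δ₁ * M := by
    intro s
    simp only [hGdef]
    refine abs_avg_le (hπ s).1 (hπ s).2 fun a => ?_
    refine (abs_sum_mul_le fun s' => abs_r_add_gV_le hP hπ' hγ0 hγ1 hr s a s').trans ?_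
    exact mul_le_mul_of_nonneg_right (hδ₁' s a) hM0
  have hAbb : ∀ s, |Ab s| ≤ 2 * δ₂ * M := by
    intro s
    have e : Ab s = ∑ a, (π s a - π' s a) * Qval P π' r γ s a := by
      simp only [hAbdef]
      rw [Vval_bellman hP hπ' hγ0 hγ1 hr s, ← Finset.sum_sub_distrib]
      exact Finset.sum_congr rfl fun a _ => by ring
    rw [e]
    refine (abs_sum_mul_le fun a => hQb s a).trans ?_
    exact mul_le_mul_of_nonneg_right (hδ₂' s) hM0
  have hd := fun t => isDist_marginal hP' hπ hρ t
  have hc := fun t => isDist_marginal hP hπ hρ t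
  have he := fun t => isDist_marginal hP' hπ' hρ t
  -- summabilities
  have sum_dG : Summable fun t : ℕ => γ ^ t * ∑ s, marginal P' π ρ t s * G s :=
    summable_geom_bdd hγ0 hγ1 fun t => abs_avg_le (hd t).1 (hd t).2 hGb
  have sum_eG : Summable fun t : ℕ => γ ^ t * ∑ s, marginal P' π' ρ t s * G s :=
    summable_geom_bdd hγ0 hγ1 fun t => abs_avg_le (he t).1 (he t).2 hGb
  have sum_dA : Summable fun t : ℕ => γ ^ t * ∑ s, marginal P' π ρ t s * Ab s :=
    summable_geom_bdd hγ0 hγ1 fun t => abs_avg_le (hd t).1 (hd t).2 hAbb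
  have sum_cA : Summable fun t : ℕ => γ ^ t * ∑ s, marginal P π ρ t s * Ab s :=
    summable_geom_bdd hγ0 hγ1 fun t => abs_avg_le (hc t).1 (hc t).2 hAbb
  -- pointwise identities
  have hPhiP : ∀ s, (∑ a, π s a * ∑ s', P s a s' * (r s a s' + γ * Vval P π' r γ s'))
      - Vval P π' r γ s = Ab s := by
    intro s
    have hQ : ∀ a, Qval P π' r γ s a
        = ∑ s', P s a s' * (r s a s' + γ * Vval P π' r γ s') := fun a => rfl
    simp only [hAbdef, hQ]
  have expand : ∀ s a, ∑ s', P' s a s' * (r s a s' + γ * Vval P π' r γ s')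
      = (∑ s', (P' s a s' - P s a s') * (r s a s' + γ * Vval P π' r γ s'))
        + Qval P π' r γ s a := by
    intro s a
    have hQ : Qval P π' r γ s a = ∑ s', P s a s' * (r s a s' + γ * Vval P π' r γ s') := rfl
    rw [hQ]
    simp only [sub_mul, Finset.sum_sub_distrib]
    ring
  have hPhiP' : ∀ s, (∑ a, π s a * ∑ s', P' s a s' * (r s a s' + γ * Vval P π' r γ s'))
      - Vval P π' r γ s = G s + Ab s := by
    intro s
    have h2 : (∑ a, π s a * ∑ s', P' s a s' * (r s a s' + γ * Vval P π' r γ s'))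
        = (∑ a, π s a * ∑ s', (P' s a s' - P s a s') * (r s a s' + γ * Vval P π' r γ s'))
          + ∑ a, π s a * Qval P π' r γ s a := by
      rw [← Finset.sum_add_distrib]
      refine Finset.sum_congr rfl fun a _ => by rw [expand s a, mul_add]
    rw [h2]
    simp only [hGdef, hAbdef]
    ring
  have hLpt : ∀ s, (∑ a, π s a * ∑ s', P' s a s' *
      (r s a s' + γ * Vval P π' r γ s' - Qval P π' r γ s a)) = G s := by
    intro s
    simp only [hGdef]
    refine Finset.sum_congr rfl fun a _ => ?_
    congr 1
    have hQ : Qval P π' r γ s a = ∑ s', P s a s' * (r s a s' + γ * Vval P π' r γ s') := rfl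
    calc ∑ s', P' s a s' * (r s a s' + γ * Vval P π' r γ s' - Qval P π' r γ s a)
        = (∑ s', P' s a s' * (r s a s' + γ * Vval P π' r γ s'))
            - (∑ s', P' s a s') * Qval P π' r γ s a := by
          simp only [mul_sub, Finset.sum_sub_distrib, Finset.sum_mul]
      _ = (∑ s', P' s a s' * (r s a s' + γ * Vval P π' r γ s'))
            - ∑ s', P s a s' * (r s a s' + γ * Vval P π' r γ s') := by
          rw [(hP' s a).2, one_mul, hQ]
      _ = ∑ s', (P' s a s' - P s a s') * (r s a s' + γ * Vval P π' r γ s') := by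
          simp only [sub_mul, Finset.sum_sub_distrib]
  -- the surrogate equals the e-marginal average of G
  have hL : (∑' t : ℕ, γ ^ t * ∑ s, marginal P' π' ρ t s * ∑ a, π s a *
        ∑ s', P' s a s' * (r s a s' + γ * Vval P π' r γ s' - Qval P π' r γ s a))
      = ∑' t : ℕ, γ ^ t * ∑ s, marginal P' π' ρ t s * G s := by
    refine tsum_congr fun t => ?_
    congr 1
    refine Finset.sum_congr rfl fun s _ => ?_
    rw [hLpt s]
  -- telescoping
  have tel1 : Jret P' π r γ ρ - ∑ s, ρ s * Vval P π' r γ s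
      = (∑' t : ℕ, γ ^ t * ∑ s, marginal P' π ρ t s * G s)
        + ∑' t : ℕ, γ ^ t * ∑ s, marginal P' π ρ t s * Ab s := by
    rw [← telescope hP' hπ hρ hγ0 hγ1 hr (Vval P π' r γ) M hVb,
      ← Summable.tsum_add sum_dG sum_dA]
    refine tsum_congr fun t => ?_
    rw [← mul_add]
    congr 1
    rw [← Finset.sum_add_distrib]
    refine Finset.sum_congr rfl fun s _ => ?_
    rw [← mul_add]
    congr 1
    exact hPhiP' s
  have tel2 : Jret P π r γ ρ - ∑ s, ρ s * Vval P π' r γ s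
      = ∑' t : ℕ, γ ^ t * ∑ s, marginal P π ρ t s * Ab s := by
    rw [← telescope hP hπ hρ hγ0 hγ1 hr (Vval P π' r γ) M hVb]
    refine tsum_congr fun t => ?_
    congr 1
  set T1 : ℝ := ∑' t : ℕ, γ ^ t *
    ∑ s, (marginal P' π ρ t s - marginal P' π' ρ t s) * G s with hT1def
  set T2 : ℝ := ∑' t : ℕ, γ ^ t *
    ∑ s, (marginal P' π ρ t s - marginal P π ρ t s) * Ab s with hT2def
  have hT1eq : T1 = (∑' t : ℕ, γ ^ t * ∑ s, marginal P' π ρ t s * G s)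
      - ∑' t : ℕ, γ ^ t * ∑ s, marginal P' π' ρ t s * G s := by
    rw [hT1def, ← Summable.tsum_sub sum_dG sum_eG]
    refine tsum_congr fun t => ?_
    rw [← mul_sub]
    congr 1
    rw [← Finset.sum_sub_distrib]
    exact Finset.sum_congr rfl fun s _ => sub_mul _ _ _
  have hT2eq : T2 = (∑' t : ℕ, γ ^ t * ∑ s, marginal P' π ρ t s * Ab s)
      - ∑' t : ℕ, γ ^ t * ∑ s, marginal P π ρ t s * Ab s := by
    rw [hT2def, ← Summable.tsum_sub sum_dA sum_cA]
    refine tsum_congr fun t => ?_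
    rw [← mul_sub]
    congr 1
    rw [← Finset.sum_sub_distrib]
    exact Finset.sum_congr rfl fun s _ => sub_mul _ _ _
  -- the key identity
  have key : Jret P' π r γ ρ - Jret P π r γ ρ
      - (∑' t : ℕ, γ ^ t * ∑ s, marginal P' π' ρ t s * ∑ a, π s a *
          ∑ s', P' s a s' * (r s a s' + γ * Vval P π' r γ s' - Qval P π' r γ s a))
      = T1 + T2 := by
    rw [hL, hT1eq, hT2eq]
    linarith [tel1, tel2]
  -- summability of the T1/T2 integrands
  have sumT1 : Summable fun t : ℕ => γ ^ t *
      ∑ s, (marginal P' π ρ t s - marginal P' π' ρ t s) * G s := by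
    refine summable_geom_bdd hγ0 hγ1 (C := 2 * (2 * δ₁ * M)) fun t => ?_
    refine (abs_sum_mul_le hGb).trans ?_
    exact mul_le_mul_of_nonneg_right (l1_le_two (hd t) (he t)) hMG0
  have sumT2 : Summable fun t : ℕ => γ ^ t *
      ∑ s, (marginal P' π ρ t s - marginal P π ρ t s) * Ab s := by
    refine summable_geom_bdd hγ0 hγ1 (C := 2 * (2 * δ₂ * M)) fun t => ?_
    refine (abs_sum_mul_le hAbb).trans ?_
    exact mul_le_mul_of_nonneg_right (l1_le_two (hd t) (hc t)) hMA0
  -- bound 1a : |T1| ≤ γ/(1-γ)² · 2δ₂ · 2δ₁M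
  have hT1a : |T1| ≤ γ / (1 - γ) ^ 2 * (2 * δ₂ * (2 * δ₁ * M)) := by
    have hb : Summable fun t : ℕ => ((t:ℝ) * γ ^ t) * (2 * δ₂ * (2 * δ₁ * M)) :=
      ((hasSum_coe_mul_geometric_of_norm_lt_one hnorm).summable).mul_right _
    rw [hT1def]
    refine (abs_tsum_le_of_le sumT1 hb fun t => ?_).trans_eq ?_
    · rw [abs_mul, abs_of_nonneg (pow_nonneg hγ0 t)]
      have h1 : |∑ s, (marginal P' π ρ t s - marginal P' π' ρ t s) * G s|
          ≤ (t : ℝ) * (2 * δ₂) * (2 * δ₁ * M) :=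
        (abs_sum_mul_le hGb).trans
          (mul_le_mul_of_nonneg_right (l1_marg_policy hP' hπ hπ' hρ hδ₂' t) hMG0)
      calc γ ^ t * |∑ s, (marginal P' π ρ t s - marginal P' π' ρ t s) * G s|
          ≤ γ ^ t * ((t : ℝ) * (2 * δ₂) * (2 * δ₁ * M)) :=
            mul_le_mul_of_nonneg_left h1 (pow_nonneg hγ0 t)
        _ = ((t:ℝ) * γ ^ t) * (2 * δ₂ * (2 * δ₁ * M)) := by ring
    · rw [tsum_mul_right, tsum_coe_mul_geometric_of_norm_lt_one hnorm]
  -- bound 1b : |T1| ≤ γ·(2·2δ₁M)/(1-γ)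
  have hT1b : |T1| ≤ γ * (2 * (2 * δ₁ * M)) / (1 - γ) := by
    have hC : (0:ℝ) ≤ 2 * (2 * δ₁ * M) := by positivity
    have hbs : Summable fun t : ℕ => γ ^ t * (if t = 0 then 0 else 2 * (2 * δ₁ * M)) := by
      refine summable_geom_bdd hγ0 hγ1 (C := 2 * (2 * δ₁ * M)) fun t => ?_
      split <;> simp [abs_of_nonneg hC, hC]
    rw [hT1def]
    refine (abs_tsum_le_of_le sumT1 hbs fun t => ?_).trans_eq ?_
    · rw [abs_mul, abs_of_nonneg (pow_nonneg hγ0 t)]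
      rcases Nat.eq_zero_or_pos t with h0 | hpos
      · subst h0
        have hz : (∑ s, (marginal P' π ρ 0 s - marginal P' π' ρ 0 s) * G s) = 0 := by
          have : ∀ s, marginal P' π ρ 0 s - marginal P' π' ρ 0 s = 0 := fun s => sub_self _
          simp [this]
        rw [hz]
        simp
      · have hne0 : t ≠ 0 := Nat.pos_iff_ne_zero.mp hpos
        rw [if_neg hne0]
        refine mul_le_mul_of_nonneg_left ?_ (pow_nonneg hγ0 t)
        refine (abs_sum_mul_le hGb).trans ?_
        exact mul_le_mul_of_nonneg_right (l1_le_two (hd t) (he t)) hMG0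
    · -- ∑' γ^t · (if t=0 then 0 else C) = γ C/(1-γ)
      rw [Summable.tsum_eq_zero_add hbs]
      have e1 : ∀ t : ℕ, (γ ^ (t + 1) * if t + 1 = 0 then (0:ℝ) else 2 * (2 * δ₁ * M))
          = γ * (γ ^ t * (2 * (2 * δ₁ * M))) := fun t => by
        rw [if_neg (Nat.succ_ne_zero t), pow_succ]; ring
      rw [tsum_congr e1, tsum_mul_left, tsum_mul_right,
        tsum_geometric_of_lt_one hγ0 hγ1, if_pos rfl, mul_zero, zero_add, inv_mul_eq_div]
      ring
  -- bound 2 : |T2| ≤ γ/(1-γ)² · 2δ₁ · 2δ₂M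
  have hT2b : |T2| ≤ γ / (1 - γ) ^ 2 * (2 * δ₁ * (2 * δ₂ * M)) := by
    have hb : Summable fun t : ℕ => ((t:ℝ) * γ ^ t) * (2 * δ₁ * (2 * δ₂ * M)) :=
      ((hasSum_coe_mul_geometric_of_norm_lt_one hnorm).summable).mul_right _
    rw [hT2def]
    refine (abs_tsum_le_of_le sumT2 hb fun t => ?_).trans_eq ?_
    · rw [abs_mul, abs_of_nonneg (pow_nonneg hγ0 t)]
      have h1 : |∑ s, (marginal P' π ρ t s - marginal P π ρ t s) * Ab s|
          ≤ (t : ℝ) * (2 * δ₁) * (2 * δ₂ * M) :=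
        (abs_sum_mul_le hAbb).trans
          (mul_le_mul_of_nonneg_right (l1_marg_kernel hP hP' hπ hρ hδ₁' t) hMA0)
      calc γ ^ t * |∑ s, (marginal P' π ρ t s - marginal P π ρ t s) * Ab s|
          ≤ γ ^ t * ((t : ℝ) * (2 * δ₁) * (2 * δ₂ * M)) :=
            mul_le_mul_of_nonneg_left h1 (pow_nonneg hγ0 t)
        _ = ((t:ℝ) * γ ^ t) * (2 * δ₁ * (2 * δ₂ * M)) := by ring
    · rw [tsum_mul_right, tsum_coe_mul_geometric_of_norm_lt_one hnorm]
  -- numeric combination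
  have hbr1 : |T1| + |T2| ≤ 4 * γ * rmax * δ₁ / (1 - γ) ^ 2 *
      (δ₂ * (γ ^ 2 + 2) / (1 - γ)) := by
    have lhs_eq : γ / (1 - γ) ^ 2 * (2 * δ₂ * (2 * δ₁ * M))
        + γ / (1 - γ) ^ 2 * (2 * δ₁ * (2 * δ₂ * M))
        = 8 * γ * δ₁ * δ₂ * rmax / (1 - γ) ^ 3 := by
      rw [hM]; field_simp; ring
    have rhs_eq : 4 * γ * rmax * δ₁ / (1 - γ) ^ 2 * (δ₂ * (γ ^ 2 + 2) / (1 - γ))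
        = 4 * γ * rmax * δ₁ * (δ₂ * (γ ^ 2 + 2)) / (1 - γ) ^ 3 := by
      rw [div_mul_div_comm, ← pow_succ]
    have hstep : 8 * γ * δ₁ * δ₂ * rmax / (1 - γ) ^ 3
        ≤ 4 * γ * rmax * δ₁ * (δ₂ * (γ ^ 2 + 2)) / (1 - γ) ^ 3 := by
      have h3 : (0:ℝ) < (1 - γ) ^ 3 := by positivity
      have hnum : 8 * γ * δ₁ * δ₂ * rmax ≤ 4 * γ * rmax * δ₁ * (δ₂ * (γ ^ 2 + 2)) := by
        have hpos : (0:ℝ) ≤ γ * rmax * δ₁ * δ₂ * γ ^ 2 := by positivity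
        nlinarith [hpos]
      exact div_le_div_of_nonneg_right hnum h3.le
    calc |T1| + |T2| ≤ γ / (1 - γ) ^ 2 * (2 * δ₂ * (2 * δ₁ * M))
          + γ / (1 - γ) ^ 2 * (2 * δ₁ * (2 * δ₂ * M)) := add_le_add hT1a hT2b
      _ = 8 * γ * δ₁ * δ₂ * rmax / (1 - γ) ^ 3 := lhs_eq
      _ ≤ 4 * γ * rmax * δ₁ * (δ₂ * (γ ^ 2 + 2)) / (1 - γ) ^ 3 := hstep
      _ = 4 * γ * rmax * δ₁ / (1 - γ) ^ 2 * (δ₂ * (γ ^ 2 + 2) / (1 - γ)) := rhs_eq.symm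
  have hbr2 : |T1| + |T2| ≤ 4 * γ * rmax * δ₁ / (1 - γ) ^ 2 * (1 + δ₂ / (1 - γ)) := by
    have heq : γ * (2 * (2 * δ₁ * M)) / (1 - γ) + γ / (1 - γ) ^ 2 * (2 * δ₁ * (2 * δ₂ * M))
        = 4 * γ * rmax * δ₁ / (1 - γ) ^ 2 * (1 + δ₂ / (1 - γ)) := by
      rw [hM]; field_simp; ring
    calc |T1| + |T2| ≤ γ * (2 * (2 * δ₁ * M)) / (1 - γ)
          + γ / (1 - γ) ^ 2 * (2 * δ₁ * (2 * δ₂ * M)) := add_le_add hT1b hT2b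
      _ = _ := heq
  have hmin : |T1| + |T2| ≤ 4 * γ * rmax * δ₁ / (1 - γ) ^ 2 *
      min (δ₂ * (γ ^ 2 + 2) / (1 - γ)) (1 + δ₂ / (1 - γ)) := by
    rcases le_total (δ₂ * (γ ^ 2 + 2) / (1 - γ)) (1 + δ₂ / (1 - γ)) with h | h
    · rw [min_eq_left h]; exact hbr1
    · rw [min_eq_right h]; exact hbr2
  have hTlow : -(|T1| + |T2|) ≤ T1 + T2 := by
    have h1 := neg_abs_le (T1 + T2)
    have h2 := abs_add_le T1 T2
    linarith
  linarith [key, hmin, hTlow]
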